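/- Let Φ be a graph property, k a positive integer, d = k(k−1)/2, let w be the Hamming weight of the f-vector f^{Φ,k}, and set β = d − w. If Φ is not trivially false on k-vertex graphs (i.e., there exists a graph on k vertices satisfying Φ), then at least one of the h-vector entries h^{Φ,k}_{β+1}, h^{Φ,k}_{β+2}, …, h^{Φ,k}_d is nonzero. -/

import Mathlib

open SimpleGraph

/-- A graph property: for each number of vertices `n`, a predicate on simple graphs
with vertex set `Fin n`. -/
abbrev GraphProperty := ∀ n : ℕ, SimpleGraph (Fin n) → Prop

/-- Invariance of a graph property under graph isomorphism. -/
def Invariant (Φ : GraphProperty) : Prop :=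
  ∀ (n : ℕ) (G G' : SimpleGraph (Fin n)), Nonempty (G ≃g G') → (Φ n G ↔ Φ n G')

/-- The number of edges of a graph. -/
noncomputable def edgeCount {V : Type} (G : SimpleGraph V) : ℕ := Nat.card G.edgeSet

/-- The `i`-th entry of the f-vector of `Φ` and `k`. -/
noncomputable def fVec (Φ : GraphProperty) (k i : ℕ) : ℕ :=
  Nat.card {L : SimpleGraph (Fin k) // edgeCount L = i ∧ Φ k L}

/-- The `ℓ`-th entry of the h-vector of `Φ` and `k`. -/
noncomputable def hVec (Φ : GraphProperty) (k ℓ : ℕ) : ℚ :=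
  ∑ i ∈ Finset.range (ℓ + 1),
    (-1 : ℚ) ^ (ℓ - i) * ((k * (k - 1) / 2 - i).choose (ℓ - i) : ℚ) * (fVec Φ k i : ℚ)

/-- The Hamming weight of the f-vector `f^{Φ,k}`: the number of indices
`i ∈ {0,…,k(k−1)/2}` with `f_i ≠ 0`. -/
noncomputable def hammingWeight (Φ : GraphProperty) (k : ℕ) : ℕ :=
  ((Finset.range (k * (k - 1) / 2 + 1)).filter (fun i => fVec Φ k i ≠ 0)).card


open Polynomial


private lemma L1 (m j : ℕ) : ((1 - X : ℚ[X]) ^ m).coeff j = (-1) ^ j * (m.choose j) := by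
  have h : (1 - X : ℚ[X]) ^ m
      = ∑ t ∈ Finset.range (m+1), C ((-1 : ℚ)^t * m.choose t) * X ^ t := by
    have h1 : (1 - X : ℚ[X]) = (-X) + 1 := by ring
    rw [h1, add_pow]
    refine Finset.sum_congr rfl fun t ht => ?_
    rw [neg_pow, one_pow]
    ring_nf
    simp [C_mul, mul_comm, mul_left_comm, mul_assoc]
  rw [h, finset_sum_coeff]
  simp only [coeff_C_mul, coeff_X_pow, mul_ite, mul_one, mul_zero]
  rw [Finset.sum_ite_eq (Finset.range (m+1)) j]
  by_cases hj : j ≤ m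
  · simp [Finset.mem_range, Nat.lt_succ_iff, hj]
  · simp [Finset.mem_range, Nat.lt_succ_iff, hj, Nat.choose_eq_zero_of_lt (show m < j by omega)]

private lemma L2 (n i ℓ : ℕ) : ((X : ℚ[X]) ^ i * (1 - X) ^ (n - i)).coeff ℓ
    = if i ≤ ℓ then (-1 : ℚ) ^ (ℓ - i) * ((n - i).choose (ℓ - i)) else 0 := by
  rw [mul_comm, coeff_mul_X_pow', L1]

private lemma L5 (n i : ℕ) (hi : i ≤ n) :
    ∑ ℓ ∈ Finset.range (n+1),
      C (((X : ℚ[X]) ^ i * (1 - X) ^ (n - i)).coeff ℓ) * (X ^ ℓ * (1 + X) ^ (n - ℓ))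
    = X ^ i := by
  have key : (1 : ℚ[X]) = ∑ m ∈ Finset.range ((n - i) + 1),
      (-X) ^ m * (1 + X) ^ ((n - i) - m) * ((n - i).choose m : ℚ[X]) := by
    rw [← add_pow]
    norm_num
  calc _ = ∑ ℓ ∈ Finset.Ico i (n+1),
        C ((-1 : ℚ) ^ (ℓ - i) * ((n - i).choose (ℓ - i))) * (X ^ ℓ * (1 + X) ^ (n - ℓ)) := by
        rw [Finset.range_eq_Ico, ← Finset.sum_Ico_consecutive _ (Nat.zero_le i) (by omega)]
        have h0 : ∑ ℓ ∈ Finset.Ico 0 i,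
            C (((X : ℚ[X]) ^ i * (1 - X) ^ (n - i)).coeff ℓ) * (X ^ ℓ * (1 + X) ^ (n - ℓ)) = 0 :=
          Finset.sum_eq_zero fun ℓ hℓ => by
            simp only [Finset.mem_Ico] at hℓ
            rw [L2, if_neg (by omega)]
            simp
        rw [h0, zero_add]
        refine Finset.sum_congr rfl fun ℓ hℓ => ?_
        simp only [Finset.mem_Ico] at hℓ
        rw [L2, if_pos hℓ.1]
    _ = ∑ m ∈ Finset.range ((n - i) + 1),
        C ((-1 : ℚ) ^ m * ((n - i).choose m)) * (X ^ (i + m) * (1 + X) ^ ((n - i) - m)) := by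
        rw [Finset.sum_Ico_eq_sum_range]
        refine Finset.sum_congr (by congr 1; omega) fun m hm => ?_
        rw [Nat.add_sub_cancel_left, show n - (i + m) = (n - i) - m from by omega]
    _ = X ^ i * ∑ m ∈ Finset.range ((n - i) + 1),
        (-X) ^ m * (1 + X) ^ ((n - i) - m) * ((n - i).choose m : ℚ[X]) := by
        rw [Finset.mul_sum]
        refine Finset.sum_congr rfl fun m hm => ?_
        have e1 : (C ((-1 : ℚ) ^ m * ((n - i).choose m : ℚ)) : ℚ[X])
            = (-1) ^ m * ((n - i).choose m : ℚ[X]) := by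
          rw [C_mul, C_eq_natCast]
          norm_num
        rw [e1, pow_add, neg_pow]
        ring
    _ = X ^ i := by rw [← key, mul_one]

private lemma L7aux : ∀ (N : ℕ) (p : ℚ[X]), p.natDegree ≤ N → p ≠ 0 → ∀ a : ℚ, a ≠ 0 →
    p.rootMultiplicity a < p.support.card := by
  intro N
  induction N with
  | zero =>
    intro p hdeg hp a ha
    have hc : ¬ p.IsRoot a := by
      rw [eq_C_of_natDegree_eq_zero (Nat.le_zero.mp hdeg)]
      simp only [IsRoot, eval_C]
      intro h
      exact hp (by rw [eq_C_of_natDegree_eq_zero (Nat.le_zero.mp hdeg), h, map_zero])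
    rw [rootMultiplicity_eq_zero hc]
    exact Finset.card_pos.mpr (Polynomial.support_nonempty.mpr hp)
  | succ N ih =>
    intro p hdeg hp a ha
    by_cases hroot : p.IsRoot a
    · have hdeg1 : p.natDegree ≠ 0 := by
        intro h0
        have := eq_C_of_natDegree_eq_zero h0
        rw [this] at hroot
        simp only [IsRoot, eval_C] at hroot
        exact hp (by rw [this, hroot, map_zero])
      by_cases h0 : p.coeff 0 = 0
      · -- p = X * q
        obtain ⟨q, hq⟩ := X_dvd_iff.mpr h0
        have hqne : q ≠ 0 := by rintro rfl; simp at hq; exact hp hq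
        have hXq : (X : ℚ[X]) * q ≠ 0 := by rw [← hq]; exact hp
        have hm : p.rootMultiplicity a = q.rootMultiplicity a := by
          rw [hq, rootMultiplicity_mul hXq,
            rootMultiplicity_eq_zero (by simp [IsRoot, ha]), zero_add]
        have hdq : q.natDegree ≤ N := by
          have : p.natDegree = 1 + q.natDegree := by
            rw [hq, natDegree_mul X_ne_zero hqne, natDegree_X]
          omega
        have hcard : q.support.card ≤ p.support.card := by
          have himg : q.support.image (· + 1) ⊆ p.support := by
            intro n hn
            simp only [Finset.mem_image] at hn
            obtain ⟨m, hm', rfl⟩ := hn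
            rw [Polynomial.mem_support_iff, hq, coeff_X_mul]
            exact Polynomial.mem_support_iff.mp hm'
          calc q.support.card = (q.support.image (· + 1)).card :=
                (Finset.card_image_of_injective _ (add_left_injective 1)).symm
            _ ≤ p.support.card := Finset.card_le_card himg
        rw [hm]
        exact lt_of_lt_of_le (ih q hdq hqne a ha) hcard
      · -- coeff 0 ≠ 0, use derivative
        have hd : derivative p ≠ 0 := by
          intro h
          exact hdeg1 (natDegree_eq_zero_of_derivative_eq_zero h)
        have hdd : (derivative p).natDegree ≤ N := by
          have := natDegree_derivative_lt hdeg1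
          omega
        have hmult : p.rootMultiplicity a = (derivative p).rootMultiplicity a + 1 := by
          have h1 := derivative_rootMultiplicity_of_root hroot
          have h2 : 1 ≤ p.rootMultiplicity a := (rootMultiplicity_pos hp).mpr hroot
          omega
        have hsupp : (derivative p).support.card < p.support.card := by
          have hsub : (derivative p).support ⊆ (p.support.erase 0).image (· - 1) := by
            intro n hn
            rw [Polynomial.mem_support_iff, coeff_derivative] at hn
            have : p.coeff (n + 1) ≠ 0 := fun h => hn (by rw [h]; ring)
            refine Finset.mem_image.mpr ⟨n + 1, ?_, by omega⟩
            exact Finset.mem_erase.mpr ⟨by omega, Polynomial.mem_support_iff.mpr this⟩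
          have h0mem : 0 ∈ p.support := Polynomial.mem_support_iff.mpr h0
          calc (derivative p).support.card ≤ ((p.support.erase 0).image (· - 1)).card :=
                Finset.card_le_card hsub
            _ ≤ (p.support.erase 0).card := Finset.card_image_le
            _ < p.support.card := Finset.card_erase_lt_of_mem h0mem
        rw [hmult]
        have := ih (derivative p) hdd hd a ha
        omega
    · rw [rootMultiplicity_eq_zero hroot]
      exact Finset.card_pos.mpr (Polynomial.support_nonempty.mpr hp)

private lemma L3 (f : ℕ → ℚ) (n ℓ : ℕ) (hℓ : ℓ ≤ n) :
    (∑ i ∈ Finset.range (n+1), C (f i) * (X ^ i * (1 - X) ^ (n - i)) : ℚ[X]).coeff ℓ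
    = ∑ i ∈ Finset.range (ℓ+1), (-1 : ℚ) ^ (ℓ - i) * ((n - i).choose (ℓ - i)) * f i := by
  rw [finset_sum_coeff]
  simp only [coeff_C_mul, L2]
  rw [← Finset.sum_subset (Finset.range_subset_range.mpr (by omega) :
      Finset.range (ℓ+1) ⊆ Finset.range (n+1))]
  · refine Finset.sum_congr rfl fun i hi => ?_
    simp only [Finset.mem_range] at hi
    rw [if_pos (by omega)]
    ring
  · intro i _ hi
    simp only [Finset.mem_range] at hi
    rw [if_neg (by omega), mul_zero]

private lemma L4 (f : ℕ → ℚ) (n : ℕ) :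
    (∑ i ∈ Finset.range (n+1), C (f i) * X ^ i : ℚ[X])
    = ∑ ℓ ∈ Finset.range (n+1),
        C ((∑ i ∈ Finset.range (n+1), C (f i) * (X ^ i * (1 - X) ^ (n - i)) : ℚ[X]).coeff ℓ)
          * (X ^ ℓ * (1 + X) ^ (n - ℓ)) := by
  symm
  calc ∑ ℓ ∈ Finset.range (n+1),
        C ((∑ i ∈ Finset.range (n+1), C (f i) * (X ^ i * (1 - X) ^ (n - i)) : ℚ[X]).coeff ℓ)
          * (X ^ ℓ * (1 + X) ^ (n - ℓ))
      = ∑ ℓ ∈ Finset.range (n+1), ∑ i ∈ Finset.range (n+1),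
          C (f i) * (C (((X : ℚ[X]) ^ i * (1 - X) ^ (n - i)).coeff ℓ)
            * (X ^ ℓ * (1 + X) ^ (n - ℓ))) := by
        refine Finset.sum_congr rfl fun ℓ _ => ?_
        rw [finset_sum_coeff]
        simp only [coeff_C_mul]
        rw [map_sum, Finset.sum_mul]
        refine Finset.sum_congr rfl fun i _ => ?_
        rw [C_mul]
        ring
    _ = ∑ i ∈ Finset.range (n+1), C (f i) * ∑ ℓ ∈ Finset.range (n+1),
          C (((X : ℚ[X]) ^ i * (1 - X) ^ (n - i)).coeff ℓ) * (X ^ ℓ * (1 + X) ^ (n - ℓ)) := by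
        rw [Finset.sum_comm]
        exact Finset.sum_congr rfl fun i _ => (Finset.mul_sum _ _ _).symm
    _ = ∑ i ∈ Finset.range (n+1), C (f i) * X ^ i := by
        refine Finset.sum_congr rfl fun i hi => ?_
        rw [L5 n i (by simpa [Nat.lt_succ_iff] using hi)]

private lemma L6 (f : ℕ → ℚ) (n j : ℕ) :
    (∑ i ∈ Finset.range (n+1), C (f i) * X ^ i : ℚ[X]).coeff j
    = if j ≤ n then f j else 0 := by
  rw [finset_sum_coeff]
  simp only [coeff_C_mul, coeff_X_pow, mul_ite, mul_one, mul_zero]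
  rw [Finset.sum_ite_eq (Finset.range (n+1)) j]
  simp [Nat.lt_succ_iff]


private lemma edgeCount_le (k : ℕ) (G : SimpleGraph (Fin k)) :
    edgeCount G ≤ k * (k - 1) / 2 := by
  have h1 : Nat.card G.edgeSet ≤ Nat.card {s : Sym2 (Fin k) // ¬ s.IsDiag} := by
    apply Nat.card_le_card_of_injective
      (fun e => (⟨e.1, G.not_isDiag_of_mem_edgeSet e.2⟩ : {s : Sym2 (Fin k) // ¬ s.IsDiag}))
    · intro a b hab
      simp only [Subtype.mk.injEq] at hab
      exact Subtype.ext hab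
  have h2 : Nat.card {s : Sym2 (Fin k) // ¬ s.IsDiag} = k.choose 2 := by
    rw [Nat.card_eq_fintype_card, Sym2.card_subtype_not_diag, Fintype.card_fin]
  calc edgeCount G ≤ k.choose 2 := by rw [edgeCount]; omega
    _ = k * (k - 1) / 2 := Nat.choose_two_right k

private lemma fVec_ne_zero (Φ : GraphProperty) (k : ℕ) (H : SimpleGraph (Fin k)) (h : Φ k H) :
    fVec Φ k (edgeCount H) ≠ 0 := by
  have hne : Nonempty {L : SimpleGraph (Fin k) // edgeCount L = edgeCount H ∧ Φ k L} :=
    ⟨⟨H, rfl, h⟩⟩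
  have hf : Finite {L : SimpleGraph (Fin k) // edgeCount L = edgeCount H ∧ Φ k L} := by
    classical
    infer_instance
  exact Nat.card_pos.ne'


/-- If `Φ` is not trivially false on `k`-vertex graphs, then some entry `h_ℓ` of the
h-vector with `d − w + 1 ≤ ℓ ≤ d` is nonzero, where `d = k(k−1)/2` and `w` is the Hamming
weight of the f-vector. -/
theorem stmt10 (Φ : GraphProperty) (hΦ : Invariant Φ) (k : ℕ) (hk : 0 < k)
    (hnt : ∃ H : SimpleGraph (Fin k), Φ k H) :
    ∃ ℓ : ℕ, ((k * (k - 1) / 2 : ℕ) : ℤ) - (hammingWeight Φ k : ℤ) + 1 ≤ (ℓ : ℤ) ∧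
      ℓ ≤ k * (k - 1) / 2 ∧ hVec Φ k ℓ ≠ 0 := by
  by_contra hcon
  push_neg at hcon
  classical
  set d := k * (k - 1) / 2 with hd
  set w := hammingWeight Φ k with hw
  set f : ℕ → ℚ := fun i => (fVec Φ k i : ℚ) with hf
  set F : ℚ[X] := ∑ i ∈ Finset.range (d+1), C (f i) * X ^ i with hF
  -- F is nonzero
  obtain ⟨H0, hH0⟩ := hnt
  have hi0 : edgeCount H0 ≤ d := edgeCount_le k H0
  have hfi0 : f (edgeCount H0) ≠ 0 := by
    simp only [hf, ne_eq, Nat.cast_eq_zero]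
    exact fVec_ne_zero Φ k H0 hH0
  have hFne : F ≠ 0 := by
    intro h
    have := L6 f d (edgeCount H0)
    rw [← hF, h] at this
    simp only [coeff_zero, if_pos hi0] at this
    exact hfi0 this.symm
  -- support of F is contained in the hamming weight filter
  have hsupp : F.support ⊆
      (Finset.range (d + 1)).filter (fun i => fVec Φ k i ≠ 0) := by
    intro j hj
    rw [Polynomial.mem_support_iff] at hj
    have h6 := L6 f d j
    rw [← hF] at h6
    rw [h6] at hj
    by_cases hjd : j ≤ d
    · rw [if_pos hjd] at hj
      refine Finset.mem_filter.mpr ⟨Finset.mem_range.mpr (by omega), ?_⟩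
      simpa [hf, Nat.cast_eq_zero] using hj
    · rw [if_neg hjd] at hj
      exact absurd rfl hj
  have hcard : F.support.card ≤ w := by
    rw [hw, hammingWeight, ← hd]
    exact Finset.card_le_card hsupp
  -- h-vector entries are coefficients of H
  have hcoeff : ∀ ℓ ≤ d,
      (∑ i ∈ Finset.range (d+1), C (f i) * (X ^ i * (1 - X) ^ (d - i)) : ℚ[X]).coeff ℓ
      = hVec Φ k ℓ := by
    intro ℓ hℓ
    rw [L3 f d ℓ hℓ, hVec]
  -- divisibility of F by (1+X)^w
  have hdvd : ((1 : ℚ[X]) + X) ^ w ∣ F := by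
    rw [hF, L4 f d]
    apply Finset.dvd_sum
    intro ℓ hℓ
    rw [Finset.mem_range] at hℓ
    by_cases hcase : ((d : ℤ) - (w : ℤ) + 1 ≤ (ℓ : ℤ))
    · rw [hcoeff ℓ (by omega), hcon ℓ hcase (by omega)]
      simp
    · have hwd : w ≤ d - ℓ := by omega
      exact Dvd.dvd.mul_left
        (dvd_mul_of_dvd_right (pow_dvd_pow _ hwd) _) _
  -- root multiplicity at -1
  have hmult : w ≤ F.rootMultiplicity (-1) := by
    rw [Polynomial.le_rootMultiplicity_iff hFne]
    have : (X - C (-1 : ℚ)) = (1 : ℚ[X]) + X := by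
      rw [map_neg, C_1]
      ring
    rw [this]
    exact hdvd
  have hlt : F.rootMultiplicity (-1) < F.support.card :=
    L7aux F.natDegree F le_rfl hFne (-1) (by norm_num)
  omega
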